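/- Let O be a commutative ring, P a group, Q a subgroup of P, φ : Q → P a group homomorphism, and ζ : P → O^× a group homomorphism such that ζ(φ(w)) = ζ(w) for all w ∈ Q. Let W = O[P] ⊗_{O[Q]} O[P], where the left factor O[P] is regarded as a right O[Q]-module via x·w = x·φ(w) for x ∈ P, w ∈ Q, and the right factor O[P] is a left O[Q]-module via the inclusion Q ⊆ P. Then there is a unique O-linear automorphism f of W satisfying f(u ⊗ v) = ζ(u·v)·(u ⊗ v) for all u, v ∈ P, and this f satisfies f(x·m·y) = ζ(x)·ζ(y)·(x·f(m)·y) for all x, y ∈ P and m ∈ W, where x·m·y denotes the O[P]-O[P]-bimodule action on W. -/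

import Mathlib

open TensorProduct

/-- The balancing relations for the tensor product `W = O[P]_φ ⊗_{O[Q]} O[P]`:
the `O`-submodule of `O[P] ⊗[O] O[P]` spanned by the elements
`(x·φ(w)) ⊗ y − x ⊗ (w·y)` for `x, y ∈ P`, `w ∈ Q`.  The quotient of `O[P] ⊗[O] O[P]`
by this submodule is the canonical realisation of `O[P]_φ ⊗_{O[Q]} O[P]`, where the left
factor `O[P]` is a right `O[Q]`-module via `x·w = x·φ(w)` and the right factor is a left
`O[Q]`-module via the inclusion `Q ⊆ P`. -/
noncomputable def focRel (O : Type*) [CommRing O] (P : Type*) [Group P]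
    (Q : Subgroup P) (φ : Q →* P) :
    Submodule O (MonoidAlgebra O P ⊗[O] MonoidAlgebra O P) :=
  Submodule.span O {a | ∃ (x y : P) (w : Q),
    a = (MonoidAlgebra.of O P x * MonoidAlgebra.of O P (φ w)) ⊗ₜ[O] MonoidAlgebra.of O P y
      - MonoidAlgebra.of O P x ⊗ₜ[O] (MonoidAlgebra.of O P (w : P) * MonoidAlgebra.of O P y)}

/-- The map `m ↦ x·m·y` on `O[P] ⊗[O] O[P]` (left multiplication by the group element `x`
on the left factor, right multiplication by the group element `y` on the right factor). -/
noncomputable def bimodMapAux (O : Type*) [CommRing O] (P : Type*) [Group P] (x y : P) :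
    MonoidAlgebra O P ⊗[O] MonoidAlgebra O P →ₗ[O] MonoidAlgebra O P ⊗[O] MonoidAlgebra O P :=
  TensorProduct.map (LinearMap.mulLeft O (MonoidAlgebra.of O P x))
    (LinearMap.mulRight O (MonoidAlgebra.of O P y))

lemma focRel_le (O : Type*) [CommRing O] (P : Type*) [Group P]
    (Q : Subgroup P) (φ : Q →* P) (x y : P) :
    focRel O P Q φ ≤ (focRel O P Q φ).comap (bimodMapAux O P x y) := by
  rw [focRel, Submodule.span_le]
  rintro a ⟨u, v, w, rfl⟩
  simp only [SetLike.mem_coe, Submodule.mem_comap, map_sub, bimodMapAux,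
    TensorProduct.map_tmul, LinearMap.mulLeft_apply, LinearMap.mulRight_apply]
  refine Submodule.subset_span ⟨x * u, v * y, w, ?_⟩
  simp only [map_mul, mul_assoc]

/-- The `O[P]`-`O[P]`-bimodule action `m ↦ x·m·y` of a pair of group elements `x, y ∈ P`
on `W = O[P]_φ ⊗_{O[Q]} O[P]`. -/
noncomputable def bimodAct (O : Type*) [CommRing O] (P : Type*) [Group P]
    (Q : Subgroup P) (φ : Q →* P) (x y : P) :
    (MonoidAlgebra O P ⊗[O] MonoidAlgebra O P ⧸ focRel O P Q φ) →ₗ[O]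
      (MonoidAlgebra O P ⊗[O] MonoidAlgebra O P ⧸ focRel O P Q φ) :=
  Submodule.mapQ _ _ (bimodMapAux O P x y) (focRel_le O P Q φ x y)

section
variable (O : Type*) [CommRing O] (P : Type*) [Group P]

noncomputable def etaHom (ζ : P →* Oˣ) : MonoidAlgebra O P →ₐ[O] MonoidAlgebra O P :=
  MonoidAlgebra.lift O _ P
    { toFun := fun u => (ζ u : O) • MonoidAlgebra.of O P u
      map_one' := by simp [MonoidAlgebra.one_def]
      map_mul' := fun u v => by
        simp [smul_smul, smul_mul_smul_comm] }

lemma etaHom_of (ζ : P →* Oˣ) (u : P) :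
    etaHom O P ζ (MonoidAlgebra.of O P u) = (ζ u : O) • MonoidAlgebra.of O P u := by
  simp [etaHom]

end

section
variable (O : Type*) [CommRing O] (P : Type*) [Group P] (Q : Subgroup P) (φ : Q →* P)

lemma eta_le (ζ : P →* Oˣ) (hζ : ∀ w : Q, ζ (φ w) = ζ (w : P)) :
    focRel O P Q φ ≤ (focRel O P Q φ).comap
      (TensorProduct.map (etaHom O P ζ).toLinearMap (etaHom O P ζ).toLinearMap) := by
  rw [focRel, Submodule.span_le]
  rintro a ⟨x, y, w, rfl⟩
  simp only [SetLike.mem_coe, Submodule.mem_comap, map_sub, TensorProduct.map_tmul,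
    AlgHom.toLinearMap_apply, map_mul, etaHom_of]
  have h1 : ((ζ x : O) • MonoidAlgebra.of O P x * (ζ (φ w) : O) • MonoidAlgebra.of O P (φ w))
      ⊗ₜ[O] ((ζ y : O) • MonoidAlgebra.of O P y)
      - ((ζ x : O) • MonoidAlgebra.of O P x) ⊗ₜ[O]
        ((ζ (w : P) : O) • MonoidAlgebra.of O P (w : P) * (ζ y : O) • MonoidAlgebra.of O P y)
      = ((ζ x : O) * (ζ (w : P) : O) * (ζ y : O)) •
        ((MonoidAlgebra.of O P x * MonoidAlgebra.of O P (φ w)) ⊗ₜ[O] MonoidAlgebra.of O P y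
          - MonoidAlgebra.of O P x ⊗ₜ[O]
            (MonoidAlgebra.of O P (w : P) * MonoidAlgebra.of O P y)) := by
    rw [hζ]
    simp only [smul_sub, smul_mul_smul_comm, TensorProduct.smul_tmul', TensorProduct.tmul_smul,
      smul_smul]
    ring_nf
  rw [h1]
  exact Submodule.smul_mem _ _ (Submodule.subset_span ⟨x, y, w, rfl⟩)

noncomputable def Fq (ζ : P →* Oˣ) (hζ : ∀ w : Q, ζ (φ w) = ζ (w : P)) :
    (MonoidAlgebra O P ⊗[O] MonoidAlgebra O P ⧸ focRel O P Q φ) →ₗ[O]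
      (MonoidAlgebra O P ⊗[O] MonoidAlgebra O P ⧸ focRel O P Q φ) :=
  Submodule.mapQ _ _ (TensorProduct.map (etaHom O P ζ).toLinearMap (etaHom O P ζ).toLinearMap)
    (eta_le O P Q φ ζ hζ)

lemma Fq_mk (ζ : P →* Oˣ) (hζ : ∀ w : Q, ζ (φ w) = ζ (w : P)) (u v : P) :
    Fq O P Q φ ζ hζ (Submodule.Quotient.mk (MonoidAlgebra.of O P u ⊗ₜ[O] MonoidAlgebra.of O P v))
      = (ζ (u * v) : O) •
        Submodule.Quotient.mk (MonoidAlgebra.of O P u ⊗ₜ[O] MonoidAlgebra.of O P v) := by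
  rw [Fq, Submodule.mapQ_apply]
  simp only [TensorProduct.map_tmul, AlgHom.toLinearMap_apply, etaHom_of]
  rw [show ((ζ u : O) • MonoidAlgebra.of O P u) ⊗ₜ[O] ((ζ v : O) • MonoidAlgebra.of O P v)
      = (ζ (u * v) : O) • (MonoidAlgebra.of O P u ⊗ₜ[O] MonoidAlgebra.of O P v) by
    rw [← TensorProduct.smul_tmul', TensorProduct.tmul_smul, smul_smul, map_mul ζ,
      Units.val_mul, mul_comm]]
  rw [Submodule.Quotient.mk_smul]

lemma quot_ext {M : Type*} [AddCommGroup M] [Module O M]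
    (g h : (MonoidAlgebra O P ⊗[O] MonoidAlgebra O P ⧸ focRel O P Q φ) →ₗ[O] M)
    (H : ∀ u v : P,
      g (Submodule.Quotient.mk (MonoidAlgebra.of O P u ⊗ₜ[O] MonoidAlgebra.of O P v))
        = h (Submodule.Quotient.mk (MonoidAlgebra.of O P u ⊗ₜ[O] MonoidAlgebra.of O P v))) :
    g = h := by
  refine Submodule.linearMap_qext _ ?_
  ext u v
  simpa using H u v

end

section
variable (O : Type*) [CommRing O] (P : Type*) [Group P] (Q : Subgroup P) (φ : Q →* P)

lemma bimodAct_mk (x y u v : P) :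
    bimodAct O P Q φ x y
        (Submodule.Quotient.mk (MonoidAlgebra.of O P u ⊗ₜ[O] MonoidAlgebra.of O P v))
      = Submodule.Quotient.mk
          (MonoidAlgebra.of O P (x * u) ⊗ₜ[O] MonoidAlgebra.of O P (v * y)) := by
  rw [bimodAct, Submodule.mapQ_apply]
  simp [bimodMapAux, map_mul]

end
/-!
STATEMENT 6.
Let `O` be a commutative ring, `P` a group, `Q` a subgroup of `P`, `φ : Q → P` a group
homomorphism, and `ζ : P → Oˣ` a group homomorphism with `ζ(φ(w)) = ζ(w)` for all `w ∈ Q`.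
Let `W = O[P]_φ ⊗_{O[Q]} O[P]` (realised as the quotient of `O[P] ⊗[O] O[P]` by the
balancing relations `focRel O P Q φ`).  Then there is a unique `O`-linear automorphism `f`
of `W` with `f(u ⊗ v) = ζ(u·v)·(u ⊗ v)` for all `u, v ∈ P`, and this `f` satisfies
`f(x·m·y) = ζ(x)·ζ(y)·(x·f(m)·y)` for all `x, y ∈ P`, `m ∈ W`.
-/
theorem stmt6 (O : Type*) [CommRing O] (P : Type*) [Group P]
    (Q : Subgroup P) (φ : Q →* P) (ζ : P →* Oˣ)
    (hζ : ∀ w : Q, ζ (φ w) = ζ (w : P)) :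
    (∃! f : (MonoidAlgebra O P ⊗[O] MonoidAlgebra O P ⧸ focRel O P Q φ) ≃ₗ[O]
        (MonoidAlgebra O P ⊗[O] MonoidAlgebra O P ⧸ focRel O P Q φ),
      ∀ u v : P,
        f (Submodule.Quotient.mk (MonoidAlgebra.of O P u ⊗ₜ[O] MonoidAlgebra.of O P v))
          = (ζ (u * v) : O) •
            Submodule.Quotient.mk (MonoidAlgebra.of O P u ⊗ₜ[O] MonoidAlgebra.of O P v))
    ∧ ∀ f : (MonoidAlgebra O P ⊗[O] MonoidAlgebra O P ⧸ focRel O P Q φ) ≃ₗ[O]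
        (MonoidAlgebra O P ⊗[O] MonoidAlgebra O P ⧸ focRel O P Q φ),
      (∀ u v : P,
        f (Submodule.Quotient.mk (MonoidAlgebra.of O P u ⊗ₜ[O] MonoidAlgebra.of O P v))
          = (ζ (u * v) : O) •
            Submodule.Quotient.mk (MonoidAlgebra.of O P u ⊗ₜ[O] MonoidAlgebra.of O P v)) →
      ∀ (x y : P) (m : MonoidAlgebra O P ⊗[O] MonoidAlgebra O P ⧸ focRel O P Q φ),
        f (bimodAct O P Q φ x y m)
          = (ζ x : O) • (ζ y : O) • bimodAct O P Q φ x y (f m) := by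
  have hζ' : ∀ w : Q, ζ⁻¹ (φ w) = ζ⁻¹ (w : P) := fun w => by
    simp [hζ w]
  refine ⟨⟨LinearEquiv.ofLinear (Fq O P Q φ ζ hζ) (Fq O P Q φ ζ⁻¹ hζ')
      (quot_ext O P Q φ _ _ fun u v => by
        simp only [LinearMap.comp_apply, LinearMap.id_apply, Fq_mk, map_smul, smul_smul]
        simp [← Units.val_mul, mul_assoc]) 
      (quot_ext O P Q φ _ _ fun u v => by
        simp only [LinearMap.comp_apply, LinearMap.id_apply, Fq_mk, map_smul, smul_smul]
        simp [← Units.val_mul, mul_assoc]), 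
    fun u v => Fq_mk O P Q φ ζ hζ u v, ?_⟩, ?_⟩
  · intro g hg
    apply LinearEquiv.toLinearMap_injective
    refine quot_ext O P Q φ _ _ fun u v => ?_
    simp only [LinearEquiv.coe_coe, LinearEquiv.ofLinear_apply]
    rw [hg u v, Fq_mk]
  · intro f hf x y m
    have key : f.toLinearMap ∘ₗ bimodAct O P Q φ x y
        = ((ζ x : O) * (ζ y : O)) • ((bimodAct O P Q φ x y) ∘ₗ f.toLinearMap) := by
      refine quot_ext O P Q φ _ _ fun u v => ?_
      simp only [LinearMap.comp_apply, LinearMap.smul_apply, LinearEquiv.coe_coe,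
        bimodAct_mk, hf, map_smul]
      rw [smul_smul]
      congr 1
      simp [map_mul, Units.val_mul]
      ring
    have h2 := LinearMap.congr_fun key m
    simpa [mul_smul] using h2
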